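/- Consider Frozen Adam on the quadratic model f(x) = (1/2) xᵀ H x, i.e. the iteration m_{t+1} = β₁ m_t + (1−β₁) H x_t, x_{t+1} = x_t − η P⁻¹ m_{t+1}, with step size η > 0, momentum parameter β₁ ∈ [0,1), initialization m_0 = 0 and arbitrary x_0 ∈ ℝ^d. Then the critical step size sup{ η > 0 : for every x_0 ∈ ℝ^d, sup_{t≥0} ‖x_t‖ < ∞ } equals 2(1+β₁) / ((1−β₁) λ_max(P⁻¹H)). -/

import Mathlib

open Matrix

/-- The Frozen Adam iterates on the quadratic model `f(x) = ½ xᵀHx`: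
`fadamIter H P η β₁ x₀ t = (x_t, m_t)` where `m_{t+1} = β₁ m_t + (1−β₁) H x_t`,
`x_{t+1} = x_t − η P⁻¹ m_{t+1}`, with `x_0 = x₀` and `m_0 = 0`. -/
noncomputable def fadamIter {d : ℕ} (H P : Matrix (Fin d) (Fin d) ℝ) (η β₁ : ℝ)
    (x₀ : Fin d → ℝ) : ℕ → (Fin d → ℝ) × (Fin d → ℝ)
  | 0 => (x₀, 0)
  | t + 1 =>
      let p := fadamIter H P η β₁ x₀ t
      let m' := β₁ • p.2 + (1 - β₁) • (H *ᵥ p.1)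
      (p.1 - η • (P⁻¹ *ᵥ m'), m')


/-- Boundedness for a 2nd-order linear recurrence whose characteristic roots
are `r, s ∈ ℂ` with `|r| ≤ 1` and `|s| < 1`. -/
lemma fadam_aux_bounded (r s : ℂ) (hr : ‖r‖ ≤ 1) (hs : ‖s‖ < 1)
    (a : ℕ → ℝ) (hrec : ∀ t, (a (t+2) : ℂ) = (r + s) * a (t+1) - (r*s) * a t) :
    ∃ C : ℝ, ∀ t, |a t| ≤ C := by
  set v : ℕ → ℂ := fun t => (a (t+1) : ℂ) - s * a t with hv
  have hstep : ∀ t, v (t+1) = r * v t := by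
    intro t
    simp only [hv]
    rw [hrec t]
    ring
  have hvb : ∀ t, ‖(v t)‖ ≤ ‖(v 0)‖ := by
    intro t
    induction t with
    | zero => exact le_rfl
    | succ n ih =>
        rw [hstep n, norm_mul]
        calc ‖r‖ * ‖(v n)‖ ≤ 1 * ‖(v n)‖ := by
              apply mul_le_mul_of_nonneg_right hr (norm_nonneg _)
          _ ≤ ‖(v 0)‖ := by rw [one_mul]; exact ih
  set K := ‖(v 0)‖ with hK
  set B := max (|a 0|) (K / (1 - ‖s‖)) with hB
  have hs1 : 0 < 1 - ‖s‖ := by linarith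
  refine ⟨B, fun t => ?_⟩
  induction t with
  | zero => exact le_max_left _ _
  | succ n ih =>
      have h1 : (a (n+1) : ℂ) = v n + s * a n := by simp [hv]
      have h2 : |a (n+1)| ≤ K + ‖s‖ * |a n| := by
        calc |a (n+1)| = ‖((a (n+1) : ℂ))‖ := (by rw [Complex.norm_real, Real.norm_eq_abs])
          _ = ‖(v n + s * a n)‖ := by rw [h1]
          _ ≤ ‖(v n)‖ + ‖(s * a n)‖ := norm_add_le _ _
          _ ≤ K + ‖s‖ * |a n| := by
              rw [norm_mul, Complex.norm_real, Real.norm_eq_abs]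
              exact add_le_add (hvb n) le_rfl
      have hKB : K ≤ (1 - ‖s‖) * B := by
        rw [hB]
        have : K / (1 - ‖s‖) ≤ max (|a 0|) (K / (1 - ‖s‖)) := le_max_right _ _
        calc K = (1 - ‖s‖) * (K / (1 - ‖s‖)) := by field_simp
          _ ≤ (1 - ‖s‖) * max (|a 0|) (K / (1 - ‖s‖)) := by
              exact mul_le_mul_of_nonneg_left this (le_of_lt hs1)
      calc |a (n+1)| ≤ K + ‖s‖ * |a n| := h2
        _ ≤ (1 - ‖s‖) * B + ‖s‖ * B := by
            exact add_le_add hKB (mul_le_mul_of_nonneg_left ih (norm_nonneg s))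
        _ = B := by ring

lemma fadam_aux_real_roots (x y : ℝ) (h0 : 0 ≤ x*y) (h1 : x*y < 1)
    (hp1 : 0 ≤ (1-x)*(1-y)) (hm1 : 0 ≤ (1+x)*(1+y)) : |x| ≤ 1 ∧ |y| ≤ 1 := by
  constructor <;> rw [abs_le] <;> constructor <;> nlinarith [sq_nonneg (x-y), sq_nonneg (x+y)]

/-- Existence of characteristic roots with the required modulus bounds. -/
lemma fadam_aux_roots (β₁ c : ℝ) (hβ0 : 0 ≤ β₁) (hβ1 : β₁ < 1) (hc0 : 0 ≤ c)
    (hc2 : c ≤ 2*(1+β₁)) :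
    ∃ r s : ℂ, ‖r‖ ≤ 1 ∧ ‖s‖ < 1 ∧
      r + s = ((1+β₁-c : ℝ) : ℂ) ∧ r * s = ((β₁ : ℝ) : ℂ) := by
  set τ : ℝ := 1 + β₁ - c with hτ
  rcases le_or_gt (τ^2 - 4*β₁) 0 with hD | hD
  · -- complex conjugate roots
    set q : ℝ := Real.sqrt (4*β₁ - τ^2) with hq
    have hq2 : q^2 = 4*β₁ - τ^2 := Real.sq_sqrt (by linarith)
    refine ⟨(τ/2 : ℝ) + (q/2 : ℝ) * Complex.I, (τ/2 : ℝ) - (q/2 : ℝ) * Complex.I, ?_, ?_, ?_, ?_⟩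
    · have habs : Complex.normSq ((τ/2 : ℝ) + (q/2 : ℝ) * Complex.I) = β₁ := by
        rw [Complex.normSq_add_mul_I]; nlinarith
      rw [Complex.norm_def, habs]
      calc Real.sqrt β₁ ≤ Real.sqrt 1 := Real.sqrt_le_sqrt (by linarith)
        _ = 1 := Real.sqrt_one
    · have habs : Complex.normSq ((τ/2 : ℝ) - (q/2 : ℝ) * Complex.I) = β₁ := by
        have : ((τ/2 : ℝ) : ℂ) - (q/2 : ℝ) * Complex.I
            = ((τ/2 : ℝ) : ℂ) + ((-(q/2) : ℝ) : ℂ) * Complex.I := by push_cast; ring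
        rw [this, Complex.normSq_add_mul_I]; nlinarith
      rw [Complex.norm_def, habs]
      calc Real.sqrt β₁ < Real.sqrt 1 := by
            apply Real.sqrt_lt_sqrt hβ0 (by linarith)
        _ = 1 := Real.sqrt_one
    · push_cast; ring
    · have : Complex.I^2 = -1 := Complex.I_sq
      have expand : (((τ/2 : ℝ) : ℂ) + (q/2 : ℝ) * Complex.I) * (((τ/2 : ℝ) : ℂ) - (q/2 : ℝ) * Complex.I)
          = ((τ/2 : ℝ)^2 : ℂ) + ((q/2 : ℝ)^2 : ℂ) := by push_cast; ring_nf; rw [Complex.I_sq]; ring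
      rw [expand]
      push_cast
      rw [show ((τ:ℂ)/2)^2 + ((q:ℂ)/2)^2 = ((τ^2 + q^2 : ℝ) : ℂ)/4 by push_cast; ring]
      rw [hq2]
      push_cast; ring
  · -- real roots
    set e : ℝ := Real.sqrt (τ^2 - 4*β₁) with he
    have he2 : e^2 = τ^2 - 4*β₁ := Real.sq_sqrt (by linarith)
    set x : ℝ := (τ - e)/2 with hx
    set y : ℝ := (τ + e)/2 with hy
    have hsum : x + y = τ := by rw [hx, hy]; ring
    have hprod : x * y = β₁ := by rw [hx, hy]; nlinarith
    have hb := fadam_aux_real_roots x y (by rw [hprod]; exact hβ0) (by rw [hprod]; exact hβ1)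
      (by nlinarith) (by nlinarith)
    have habsprod : |x| * |y| = β₁ := by rw [← abs_mul, hprod, abs_of_nonneg hβ0]
    rcases le_total (|x|) (|y|) with hxy | hxy
    · refine ⟨(y : ℂ), (x : ℂ), ?_, ?_, ?_, ?_⟩
      · rw [Complex.norm_real, Real.norm_eq_abs]; exact hb.2
      · rw [Complex.norm_real, Real.norm_eq_abs]
        nlinarith [abs_nonneg x, abs_nonneg y]
      · have : y + x = τ := by linarith
        exact_mod_cast this
      · have : y * x = β₁ := by nlinarith
        exact_mod_cast this
    · refine ⟨(x : ℂ), (y : ℂ), ?_, ?_, ?_, ?_⟩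
      · rw [Complex.norm_real, Real.norm_eq_abs]; exact hb.1
      · rw [Complex.norm_real, Real.norm_eq_abs]
        nlinarith [abs_nonneg x, abs_nonneg y]
      · exact_mod_cast hsum
      · exact_mod_cast hprod

/-- Unboundedness of the scalar recurrence beyond the critical step size. -/
lemma fadam_aux_unbounded (β₁ c : ℝ) (hβ0 : 0 ≤ β₁) (hβ1 : β₁ < 1) (hc : 2*(1+β₁) < c)
    (a : ℕ → ℝ) (ha0 : a 0 = 1) (ha1 : a 1 = 1 - c)
    (hrec : ∀ t, a (t+2) = (1+β₁-c) * a (t+1) - β₁ * a t) :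
    ∀ C : ℝ, ∃ t, C < |a t| := by
  set τ : ℝ := 1 + β₁ - c with hτ
  have hD : 0 < τ^2 - 4*β₁ := by nlinarith [sq_nonneg (1-β₁), sq_nonneg (1+β₁)]
  set e : ℝ := Real.sqrt (τ^2 - 4*β₁) with he
  have he2 : e^2 = τ^2 - 4*β₁ := Real.sq_sqrt (le_of_lt hD)
  have he0 : 0 < e := Real.sqrt_pos.mpr hD
  set r : ℝ := (τ - e)/2 with hr
  set s : ℝ := (τ + e)/2 with hs
  have hsum : r + s = τ := by rw [hr, hs]; ring
  have hprod : r * s = β₁ := by rw [hr, hs]; nlinarith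
  have hrs : r < s := by rw [hr, hs]; linarith
  -- p(-1) = (1+r)(1+s) < 0 forces r < -1 < s
  have hpm1 : (1+r)*(1+s) < 0 := by nlinarith
  have hr1 : r < -1 := by nlinarith
  have hs1 : -1 < s := by nlinarith
  have hs0 : s ≤ 0 := by nlinarith
  set v : ℕ → ℝ := fun t => a (t+1) - s * a t with hv
  have hstep : ∀ t, v (t+1) = r * v t := by
    intro t; simp only [hv]; rw [hrec t]; linear_combination (-(a (t+1))) * hsum + a t * hprod
  have hvt : ∀ t, v t = r^t * v 0 := by
    intro t
    induction t with
    | zero => simp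
    | succ n ih => rw [hstep n, ih, pow_succ]; ring
  have hv0 : v 0 < 0 := by
    simp only [hv, ha0, ha1]; nlinarith
  intro C
  by_contra hC
  push_neg at hC
  have hC1 : 1 ≤ C := by have := hC 0; rw [ha0] at this; simpa using this
  have hbound : ∀ t, |v t| ≤ 2*C := by
    intro t
    have : |v t| ≤ |a (t+1)| + |s| * |a t| := by
      simp only [hv]
      calc |a (t+1) - s * a t| ≤ |a (t+1)| + |s * a t| := abs_sub _ _
        _ = |a (t+1)| + |s| * |a t| := by rw [abs_mul]
    have hsabs : |s| ≤ 1 := abs_le.mpr ⟨le_of_lt hs1, by linarith⟩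
    calc |v t| ≤ |a (t+1)| + |s| * |a t| := this
      _ ≤ C + 1 * C := by
          apply add_le_add (hC _)
          apply mul_le_mul hsabs (hC t) (abs_nonneg _) zero_le_one
      _ = 2*C := by ring
  have hrabs : 1 < |r| := by rw [abs_of_neg (by linarith : r < 0)]; linarith
  obtain ⟨n, hn⟩ := pow_unbounded_of_one_lt (2*C / |v 0|) hrabs
  have hv0abs : 0 < |v 0| := abs_pos.mpr (ne_of_lt hv0)
  have : |v n| = |r|^n * |v 0| := by rw [hvt n, abs_mul, abs_pow]
  have h2 : 2*C < |r|^n * |v 0| := by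
    rw [div_lt_iff₀ hv0abs] at hn
    linarith
  have := hbound n
  linarith [this, h2, (by rw [hvt n, abs_mul, abs_pow] : |v n| = |r|^n * |v 0|)]

lemma fadam_aux_mulVec_norm {d : ℕ} (M : Matrix (Fin d) (Fin d) ℝ) :
    ∃ K : ℝ, 0 ≤ K ∧ ∀ y : Fin d → ℝ, ‖M *ᵥ y‖ ≤ K * ‖y‖ := by
  refine ⟨∑ i, ∑ j, |M i j|, by positivity, fun y => ?_⟩
  have hK : 0 ≤ (∑ i, ∑ j, |M i j|) * ‖y‖ := by positivity
  rw [pi_norm_le_iff_of_nonneg hK]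
  intro i
  rw [Real.norm_eq_abs]
  calc |(M *ᵥ y) i| = |∑ j, M i j * y j| := by simp [Matrix.mulVec, dotProduct]
    _ ≤ ∑ j, |M i j * y j| := Finset.abs_sum_le_sum_abs _ _
    _ ≤ ∑ j, |M i j| * ‖y‖ := by
        apply Finset.sum_le_sum
        intro j _
        rw [abs_mul]
        exact mul_le_mul_of_nonneg_left ((Real.norm_eq_abs (y j)) ▸ norm_le_pi_norm y j) (abs_nonneg _)
    _ = (∑ j, |M i j|) * ‖y‖ := by rw [Finset.sum_mul]
    _ ≤ (∑ i, ∑ j, |M i j|) * ‖y‖ := by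
        apply mul_le_mul_of_nonneg_right _ (norm_nonneg y)
        exact Finset.single_le_sum (f := fun i => ∑ j, |M i j|) (fun k _ => by positivity) (Finset.mem_univ i)


set_option maxHeartbeats 1000000

open scoped MatrixOrder

/-- **Stability of Frozen Adam.**  For Frozen Adam with momentum `β₁ ∈ [0,1)` and fixed
symmetric positive definite preconditioner `P` on the quadratic model, the critical step size
`sup { η > 0 | ∀ x₀, sup_t ‖x_t‖ < ∞ }` equals `2(1+β₁) / ((1−β₁) λ_max(P⁻¹H))`,
where `λ_max(P⁻¹H)` is the largest (real) eigenvalue of `P⁻¹H`. -/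
theorem frozen_adam_critical_step_size {d : ℕ} (H P : Matrix (Fin d) (Fin d) ℝ)
    (hH : H.PosSemidef) (hH0 : H ≠ 0) (hP : P.PosDef)
    (β₁ : ℝ) (hβ₁ : β₁ ∈ Set.Ico (0 : ℝ) 1) :
    sSup {η : ℝ | 0 < η ∧ ∀ x₀ : Fin d → ℝ, ∃ C : ℝ, ∀ t : ℕ,
        ‖(fadamIter H P η β₁ x₀ t).1‖ ≤ C}
      = 2 * (1 + β₁) /
        ((1 - β₁) * sSup {c : ℝ | ∃ v : Fin d → ℝ, v ≠ 0 ∧ (P⁻¹ * H) *ᵥ v = c • v}) := by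
  classical
  obtain ⟨hβ0, hβ1⟩ := hβ₁
  have hd : 0 < d := by
    rcases Nat.eq_zero_or_pos d with h | h
    · exfalso; apply hH0; subst h; ext i; exact i.elim0
    · exact h
  haveI : Nonempty (Fin d) := ⟨⟨0, hd⟩⟩
  set R := CFC.sqrt P with hRdef
  have hRsd : R.PosSemidef := (CFC.sqrt_nonneg P).posSemidef
  have hRR : R * R = P := CFC.sqrt_mul_sqrt_self P hP.posSemidef.nonneg
  have hRdet : IsUnit R.det := by
    have h2 : R.det * R.det = P.det := by rw [← det_mul, hRR]
    have : P.det ≠ 0 := ne_of_gt hP.det_pos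
    apply isUnit_iff_ne_zero.mpr
    intro h0
    rw [h0, mul_zero] at h2
    exact this h2.symm
  have hRinv : R * R⁻¹ = 1 := mul_nonsing_inv R hRdet
  have hRinv' : R⁻¹ * R = 1 := nonsing_inv_mul R hRdet
  have hPinv : P⁻¹ = R⁻¹ * R⁻¹ := by rw [← hRR, Matrix.mul_inv_rev]
  have hRH : Rᴴ = R := hRsd.1
  clear_value R
  have hRiH : (R⁻¹)ᴴ = R⁻¹ := by rw [conjTranspose_nonsing_inv, hRH]
  set S := R⁻¹ * H * R⁻¹ with hSdef
  have hSsd : S.PosSemidef := by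
    have := hH.mul_mul_conjTranspose_same R⁻¹
    rwa [hRiH] at this
  have hS : S.IsHermitian := hSsd.1
  clear_value S
  set lam := hS.eigenvalues with hlam
  set U : Matrix (Fin d) (Fin d) ℝ := (hS.eigenvectorUnitary : Matrix (Fin d) (Fin d) ℝ) with hU
  have hUU : U * Uᴴ = 1 := by
    have h := hS.eigenvectorUnitary.2.2
    rwa [Matrix.star_eq_conjTranspose] at h
  have hUU' : Uᴴ * U = 1 := by
    have h := hS.eigenvectorUnitary.2.1
    rwa [Matrix.star_eq_conjTranspose] at h
  have hspec : S = U * diagonal lam * Uᴴ := by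
    have := hS.spectral_theorem
    simpa [hU, hlam, Matrix.star_eq_conjTranspose] using this
  have hvec : ∀ i, ∃ u : Fin d → ℝ, u ≠ 0 ∧ S *ᵥ u = lam i • u := by
    intro i
    exact ⟨⇑(hS.eigenvectorBasis i), fun h => hS.eigenvectorBasis.orthonormal.ne_zero i (by ext j; simpa using congrFun h j),
      hS.mulVec_eigenvectorBasis i⟩
  have hlam0 : ∀ i, 0 ≤ lam i := hSsd.eigenvalues_nonneg
  clear_value lam U
  have hHSR : H = R * S * R := by
    rw [hSdef]
    calc H = (R * R⁻¹) * H * (R⁻¹ * R) := by rw [hRinv, hRinv']; simp [Matrix.mul_assoc]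
      _ = R * (R⁻¹ * H * R⁻¹) * R := by simp only [Matrix.mul_assoc]
  set E := {c : ℝ | ∃ v : Fin d → ℝ, v ≠ 0 ∧ (P⁻¹ * H) *ᵥ v = c • v} with hE
  -- E equals the set of eigenvalues of S
  have hEsub : E ⊆ Set.range lam := by
    rintro c ⟨v, hv0, hcv⟩
    set u := R *ᵥ v with hu
    have hu0 : u ≠ 0 := by
      intro h
      apply hv0
      have : R⁻¹ *ᵥ (R *ᵥ v) = R⁻¹ *ᵥ 0 := by rw [← hu, h]
      rwa [Matrix.mulVec_mulVec, hRinv', Matrix.one_mulVec, Matrix.mulVec_zero] at this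
    have hSu : S *ᵥ u = c • u := by
      rw [hu, Matrix.mulVec_mulVec]
      have h1 : S * R = R⁻¹ * H := by
        rw [hSdef, Matrix.mul_assoc, hRinv', Matrix.mul_one]
      rw [h1]
      have h2 : R⁻¹ * H = R * (P⁻¹ * H) := by
        rw [hPinv, Matrix.mul_assoc, ← Matrix.mul_assoc R R⁻¹, hRinv, Matrix.one_mul]
      rw [h2, ← Matrix.mulVec_mulVec, hcv, Matrix.mulVec_smul]
    -- c is a root of det (S - c • 1)
    have hdet : (S - c • 1).det = 0 := by
      rw [← Matrix.exists_mulVec_eq_zero_iff]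
      refine ⟨u, hu0, ?_⟩
      rw [Matrix.sub_mulVec, hSu, Matrix.smul_mulVec, Matrix.one_mulVec, sub_self]
    have hfact : S - c • 1 = U * diagonal (fun i => lam i - c) * Uᴴ := by
      have h2 : diagonal (fun i => lam i - c) = diagonal lam - c • (1 : Matrix (Fin d) (Fin d) ℝ) := by
        rw [Matrix.smul_one_eq_diagonal, ← Matrix.diagonal_sub]
      rw [h2, Matrix.mul_sub, Matrix.sub_mul, ← hspec, Matrix.mul_smul, Matrix.mul_one,
        Matrix.smul_mul, hUU]
    have hprod0 : ∏ i, (lam i - c) = 0 := by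
      have hdetU : U.det * Uᴴ.det = 1 := by rw [← det_mul, hUU, det_one]
      have : (S - c • 1).det = U.det * Uᴴ.det * ∏ i, (lam i - c) := by
        rw [hfact, det_mul, det_mul, det_diagonal]; ring
      rw [hdet, hdetU, one_mul] at this
      exact this.symm
    obtain ⟨i, _, hi⟩ := Finset.prod_eq_zero_iff.mp hprod0
    exact ⟨i, by linarith [sub_eq_zero.mp hi]⟩
  have hEsup : Set.range lam ⊆ E := by
    rintro c ⟨i, rfl⟩
    obtain ⟨u, hu0, hSu⟩ := hvec i
    refine ⟨R⁻¹ *ᵥ u, ?_, ?_⟩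
    · intro h
      apply hu0
      have : R *ᵥ (R⁻¹ *ᵥ u) = R *ᵥ 0 := by rw [h]
      rwa [Matrix.mulVec_mulVec, hRinv, Matrix.one_mulVec, Matrix.mulVec_zero] at this
    · have h1 : P⁻¹ * H * R⁻¹ = R⁻¹ * S := by
        rw [hPinv, hSdef]; simp only [Matrix.mul_assoc]
      rw [Matrix.mulVec_mulVec, h1, ← Matrix.mulVec_mulVec, hSu, Matrix.mulVec_smul]
  have hEeq : E = Set.range lam := le_antisymm hEsub hEsup
  -- the largest eigenvalue
  obtain ⟨i0, -, hi0⟩ := Finset.exists_max_image Finset.univ lam ⟨Classical.arbitrary _, Finset.mem_univ _⟩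
  set L := lam i0 with hL
  have hsupE : sSup E = L := by
    rw [hEeq]
    apply le_antisymm
    · apply csSup_le (Set.range_nonempty lam)
      rintro c ⟨i, rfl⟩
      exact hi0 i (Finset.mem_univ i)
    · exact le_csSup (Set.finite_range lam).bddAbove ⟨i0, rfl⟩
  have hL0 : 0 < L := by
    rcases lt_or_eq_of_le (hlam0 i0) with h | h
    · exact h
    · exfalso
      apply hH0
      have hlamz : lam = fun _ => (0:ℝ) := by
        funext i
        have h1 := hi0 i (Finset.mem_univ i)
        have h2 := hlam0 i
        have h3 : L = 0 := by rw [hL, ← h]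
        rw [h3] at h1
        linarith
      have hSz : S = 0 := by
        rw [hspec, hlamz]
        simp
      rw [hHSR, hSz, Matrix.mul_zero, Matrix.zero_mul]
  rw [hE] at hsupE ⊢
  rw [hsupE]
  set η := 2 * (1 + β₁) / ((1 - β₁) * L) with hη
  have hβ1pos : 0 < 1 - β₁ := by linarith
  have hηpos : 0 < η := by
    apply div_pos (by linarith) (mul_pos hβ1pos hL0)
  have hηL : η * ((1 - β₁) * L) = 2 * (1 + β₁) := by
    rw [hη]; field_simp
  set A := {η' : ℝ | 0 < η' ∧ ∀ x₀ : Fin d → ℝ, ∃ C : ℝ, ∀ t : ℕ,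
      ‖(fadamIter H P η' β₁ x₀ t).1‖ ≤ C} with hA
  -- upper bound: every admissible step size is at most η
  have hub : ∀ η' ∈ A, η' ≤ η := by
    rintro η' ⟨hη'0, hbd⟩
    by_contra hgt
    push_neg at hgt
    set c : ℝ := η' * ((1 - β₁) * L) with hc
    have hcgt : 2*(1+β₁) < c := by
      rw [hc, ← hηL]
      exact mul_lt_mul_of_pos_right hgt (mul_pos hβ1pos hL0)
    obtain ⟨v, hv0, hveig⟩ : ∃ v : Fin d → ℝ, v ≠ 0 ∧ (P⁻¹ * H) *ᵥ v = L • v := hEsup ⟨i0, rfl⟩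
    set ab : ℕ → ℝ × ℝ := fun t => Nat.rec ((1:ℝ), (0:ℝ))
      (fun _ p => (p.1 - η' * L * (β₁ * p.2 + (1 - β₁) * p.1),
        β₁ * p.2 + (1 - β₁) * p.1)) t with hab
    have hab0 : ab 0 = (1, 0) := rfl
    have habs : ∀ t, ab (t+1) = ((ab t).1 - η' * L * (β₁ * (ab t).2 + (1 - β₁) * (ab t).1),
        β₁ * (ab t).2 + (1 - β₁) * (ab t).1) := fun t => rfl
    have hPHv : P⁻¹ *ᵥ (H *ᵥ v) = L • v := by
      rw [Matrix.mulVec_mulVec, hveig]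
    have hiter : ∀ t, fadamIter H P η' β₁ v t = ((ab t).1 • v, (ab t).2 • (H *ᵥ v)) := by
      intro t
      induction t with
      | zero =>
          rw [fadamIter, hab0]
          simp
      | succ n ih =>
          rw [fadamIter, ih, habs n]
          simp only [Matrix.mulVec_smul]
          have hm : β₁ • ((ab n).2 • (H *ᵥ v)) + (1 - β₁) • ((ab n).1 • (H *ᵥ v))
              = (β₁ * (ab n).2 + (1 - β₁) * (ab n).1) • (H *ᵥ v) := by
            rw [smul_smul, smul_smul, ← add_smul]
          rw [hm]
          refine Prod.ext ?_ rfl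
          simp only []
          rw [Matrix.mulVec_smul, hPHv]
          module
    set a : ℕ → ℝ := fun t => (ab t).1 with ha
    have hb : ∀ t, η' * L * (ab (t+1)).2 = a t - a (t+1) := by
      intro t
      rw [ha]
      simp only [habs t]
      ring
    have hrec : ∀ t, a (t+2) = (1+β₁-c) * a (t+1) - β₁ * a t := by
      intro t
      have h1 : a (t+2) = a (t+1) - η' * L * (β₁ * (ab (t+1)).2 + (1 - β₁) * a (t+1)) := by
        rw [ha]
      rw [h1]
      have h2 := hb t
      rw [hc]
      linear_combination (-β₁) * h2
    have ha0 : a 0 = 1 := by rw [ha]; simp [hab0]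
    have ha1 : a 1 = 1 - c := by
      have h := habs 0
      rw [hab0] at h
      show (ab (0+1)).1 = 1 - c
      rw [h, hc]
      norm_num
      ring
    obtain ⟨C, hC⟩ := hbd v
    have hunb := fadam_aux_unbounded β₁ c hβ0 hβ1 hcgt a ha0 ha1 hrec (C / ‖v‖)
    obtain ⟨t, ht⟩ := hunb
    have hvnorm : 0 < ‖v‖ := norm_pos_iff.mpr hv0
    have hxn : ‖(fadamIter H P η' β₁ v t).1‖ = |a t| * ‖v‖ := by
      rw [hiter t]
      simp only []
      rw [norm_smul, Real.norm_eq_abs]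
    have := hC t
    rw [hxn] at this
    rw [div_lt_iff₀ hvnorm] at ht
    linarith
  -- membership: the critical step size itself is admissible
  have hmem : η ∈ A := by
    refine ⟨hηpos, fun x₀ => ?_⟩
    set x : ℕ → (Fin d → ℝ) := fun t => (fadamIter H P η β₁ x₀ t).1 with hxdef
    set m : ℕ → (Fin d → ℝ) := fun t => (fadamIter H P η β₁ x₀ t).2 with hmdef
    have hm : ∀ t, m (t+1) = β₁ • m t + (1-β₁) • (H *ᵥ x t) := by
      intro t
      show (fadamIter H P η β₁ x₀ (t+1)).2 = _
      rw [fadamIter]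
    have hx : ∀ t, x (t+1) = x t - η • (P⁻¹ *ᵥ m (t+1)) := by
      intro t
      show (fadamIter H P η β₁ x₀ (t+1)).1 = _
      rw [fadamIter, hm t]
    set Bm : Matrix (Fin d) (Fin d) ℝ := Uᴴ * R with hBm
    set Cm : Matrix (Fin d) (Fin d) ℝ := Uᴴ * R⁻¹ with hCm
    have hBP : Bm * P⁻¹ = Cm := by
      rw [hBm, hCm, hPinv]
      calc Uᴴ * R * (R⁻¹ * R⁻¹) = Uᴴ * (R * R⁻¹ * R⁻¹) := by simp only [Matrix.mul_assoc]
        _ = Uᴴ * R⁻¹ := by rw [hRinv, Matrix.one_mul]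
    have hCH : Cm * H = diagonal lam * Bm := by
      have h1 : S * R = R⁻¹ * H := by
        rw [hSdef, Matrix.mul_assoc, hRinv', Matrix.mul_one]
      have h2 : Uᴴ * S = diagonal lam * Uᴴ := by
        rw [hspec]
        calc Uᴴ * (U * diagonal lam * Uᴴ) = (Uᴴ * U) * diagonal lam * Uᴴ := by
              simp only [Matrix.mul_assoc]
          _ = diagonal lam * Uᴴ := by rw [hUU', Matrix.one_mul]
      rw [hCm, hBm]
      calc Uᴴ * R⁻¹ * H = Uᴴ * (R⁻¹ * H) := by rw [Matrix.mul_assoc]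
        _ = Uᴴ * (S * R) := by rw [h1]
        _ = (Uᴴ * S) * R := by rw [Matrix.mul_assoc]
        _ = diagonal lam * Uᴴ * R := by rw [h2]
        _ = diagonal lam * (Uᴴ * R) := by rw [Matrix.mul_assoc]
    set z : ℕ → (Fin d → ℝ) := fun t => Bm *ᵥ x t with hzdef
    set w : ℕ → (Fin d → ℝ) := fun t => Cm *ᵥ m t with hwdef
    have hw : ∀ t, w (t+1) = β₁ • w t + (1-β₁) • (diagonal lam *ᵥ z t) := by
      intro t
      rw [hwdef]
      simp only []
      rw [hm t, Matrix.mulVec_add, Matrix.mulVec_smul, Matrix.mulVec_smul,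
        Matrix.mulVec_mulVec, hCH, hzdef]
      simp only [Matrix.mulVec_mulVec]
    have hz : ∀ t, z (t+1) = z t - η • w (t+1) := by
      intro t
      rw [hzdef]
      simp only []
      rw [hx t, Matrix.mulVec_sub, Matrix.mulVec_smul, Matrix.mulVec_mulVec, hBP]
    have hbnd : ∀ i : Fin d, ∃ Ci : ℝ, ∀ t, |z t i| ≤ Ci := by
      intro i
      set ci : ℝ := η * (1-β₁) * lam i with hci
      have hci0 : 0 ≤ ci := by
        apply mul_nonneg (mul_nonneg (le_of_lt hηpos) (le_of_lt hβ1pos)) (hlam0 i)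
      have hci2 : ci ≤ 2*(1+β₁) := by
        rw [← hηL, hci]
        rw [← mul_assoc]
        exact mul_le_mul_of_nonneg_left (hi0 i (Finset.mem_univ i))
          (mul_nonneg (le_of_lt hηpos) (le_of_lt hβ1pos))
      set a : ℕ → ℝ := fun t => z t i with hadef
      have hwz : ∀ t, η * w (t+1) i = a t - a (t+1) := by
        intro t
        have := congrFun (hz t) i
        simp only [Pi.sub_apply, Pi.smul_apply, smul_eq_mul] at this
        rw [hadef]
        simp only []
        linarith [this]
      have hrec2 : ∀ t, a (t+2) = (1+β₁-ci) * a (t+1) - β₁ * a t := by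
        intro t
        have h1 := congrFun (hz (t+1)) i
        simp only [Pi.sub_apply, Pi.smul_apply, smul_eq_mul] at h1
        have h2 := congrFun (hw (t+1)) i
        simp only [Pi.add_apply, Pi.smul_apply, smul_eq_mul] at h2
        have h3 : (diagonal lam *ᵥ z (t+1)) i = lam i * z (t+1) i :=
          Matrix.mulVec_diagonal lam (z (t+1)) i
        rw [h3] at h2
        have h4 := hwz t
        rw [hadef]
        simp only []
        rw [h1, h2, hci]
        have h5 : η * w (t+1) i = z t i - z (t+1) i := h4
        nlinarith [h5]
      obtain ⟨r, s, hr, hs, hsum', hprod'⟩ := fadam_aux_roots β₁ ci hβ0 hβ1 hci0 hci2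
      apply fadam_aux_bounded r s hr hs a
      intro t
      rw [hsum', hprod']
      have := hrec2 t
      push_cast
      exact_mod_cast congrArg (fun y : ℝ => (y : ℂ)) this
    choose Cf hCf using hbnd
    have hK0 : 0 ≤ ∑ i, |Cf i| := Finset.sum_nonneg fun i _ => abs_nonneg _
    have hzK : ∀ t, ‖z t‖ ≤ ∑ i, |Cf i| := by
      intro t
      rw [pi_norm_le_iff_of_nonneg hK0]
      intro i
      rw [Real.norm_eq_abs]
      calc |z t i| ≤ Cf i := hCf i t
        _ ≤ |Cf i| := le_abs_self _
        _ ≤ ∑ j, |Cf j| := Finset.single_le_sum (fun j _ => abs_nonneg (Cf j)) (Finset.mem_univ i)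
    have hxz : ∀ t, x t = (R⁻¹ * U) *ᵥ z t := by
      intro t
      rw [hzdef]
      simp only []
      rw [Matrix.mulVec_mulVec]
      have : R⁻¹ * U * (Uᴴ * R) = 1 := by
        calc R⁻¹ * U * (Uᴴ * R) = R⁻¹ * (U * Uᴴ) * R := by simp only [Matrix.mul_assoc]
          _ = R⁻¹ * R := by rw [hUU, Matrix.mul_one]
          _ = 1 := hRinv'
      rw [this, Matrix.one_mulVec]
    obtain ⟨K', hK'0, hK'⟩ := fadam_aux_mulVec_norm (R⁻¹ * U)
    refine ⟨K' * (∑ i, |Cf i|), fun t => ?_⟩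
    have : ‖x t‖ ≤ K' * (∑ i, |Cf i|) := by
      rw [hxz t]
      calc ‖(R⁻¹ * U) *ᵥ z t‖ ≤ K' * ‖z t‖ := hK' (z t)
        _ ≤ K' * (∑ i, |Cf i|) := mul_le_mul_of_nonneg_left (hzK t) hK'0
    exact this
  exact le_antisymm (csSup_le ⟨η, hmem⟩ hub) (le_csSup ⟨η, hub⟩ hmem)
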